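/- SI_GH(S;Y,Z) := max{I(Q;S) : I(S;Q|Y) = I(S;Q|Z) = 0} is superadditive: if (S1,Y1,Z1) is independent of (S2,Y2,Z2), then SI_GH(S1S2;Y1Y2,Z1Z2) ≥ SI_GH(S1;Y1,Z1) + SI_GH(S2;Y2,Z2). -/

import Mathlib

open scoped BigOperators

/-- A probability distribution on a finite type. -/
def IsProbDist {A : Type} [Fintype A] (p : A → ℝ) : Prop :=
  (∀ x, 0 ≤ p x) ∧ ∑ x, p x = 1

/-- Shannon mutual information `I(A;B)` of a joint distribution on `A × B`. -/
noncomputable def mi2 {A B : Type} [Fintype A] [Fintype B] (p : A × B → ℝ) : ℝ :=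
  ∑ a, ∑ b, p (a, b) * Real.log (p (a, b) / ((∑ b', p (a, b')) * (∑ a', p (a', b))))

/-- Conditional mutual information `I(A;B|C)` of a joint distribution on `A × B × C`. -/
noncomputable def cmi3 {A B C : Type} [Fintype A] [Fintype B] [Fintype C]
    (p : A × B × C → ℝ) : ℝ :=
  ∑ a, ∑ b, ∑ c, p (a, b, c) *
    Real.log ((p (a, b, c) * (∑ a', ∑ b', p (a', b', c))) /
      ((∑ b', p (a, b', c)) * (∑ a', p (a', b, c))))

/-- Marginal distribution of `(S,Y)`. -/
noncomputable def margSY {S Y Z : Type} [Fintype S] [Fintype Y] [Fintype Z]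
    (p : S × Y × Z → ℝ) : S × Y → ℝ := fun x => ∑ z, p (x.1, x.2, z)

/-- Marginal distribution of `(S,Z)`. -/
noncomputable def margSZ {S Y Z : Type} [Fintype S] [Fintype Y] [Fintype Z]
    (p : S × Y × Z → ℝ) : S × Z → ℝ := fun x => ∑ y, p (x.1, y, x.2)

/-- `I(S;Y)`. -/
noncomputable def ISY {S Y Z : Type} [Fintype S] [Fintype Y] [Fintype Z]
    (p : S × Y × Z → ℝ) : ℝ := mi2 (margSY p)

/-- `I(S;Z)`. -/
noncomputable def ISZ {S Y Z : Type} [Fintype S] [Fintype Y] [Fintype Z]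
    (p : S × Y × Z → ℝ) : ℝ := mi2 (margSZ p)

/-- `I(S;YZ)`, the mutual information of `S` with the pair `(Y,Z)`. -/
noncomputable def ISYZ {S Y Z : Type} [Fintype S] [Fintype Y] [Fintype Z]
    (p : S × Y × Z → ℝ) : ℝ := mi2 p

/-- `I(S;Y|Z)`. -/
noncomputable def ISYgZ {S Y Z : Type} [Fintype S] [Fintype Y] [Fintype Z]
    (p : S × Y × Z → ℝ) : ℝ := cmi3 p

/-- The same joint distribution, with the roles of `Y` and `Z` exchanged. -/
def swapYZ {S Y Z : Type} (p : S × Y × Z → ℝ) : S × Z × Y → ℝ :=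
  fun x => p (x.1, x.2.2, x.2.1)

/-- `I(S;Z|Y)`. -/
noncomputable def ISZgY {S Y Z : Type} [Fintype S] [Fintype Y] [Fintype Z]
    (p : S × Y × Z → ℝ) : ℝ := ISYgZ (swapYZ p)

/-- The joint distribution of two independent triples, grouped componentwise. -/
def prodDist {S1 Y1 Z1 S2 Y2 Z2 : Type}
    (p1 : S1 × Y1 × Z1 → ℝ) (p2 : S2 × Y2 × Z2 → ℝ) :
    (S1 × S2) × (Y1 × Y2) × (Z1 × Z2) → ℝ :=
  fun x => p1 (x.1.1, x.2.1.1, x.2.2.1) * p2 (x.1.2, x.2.1.2, x.2.2.2)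

/-- `SI_GH(S;Y,Z) = max { I(Q;S) : I(S;Q|Y) = I(S;Q|Z) = 0 }`, the supremum
running over all finite random variables `Q` jointly distributed with `(S,Y,Z)`
(extending the given joint distribution) such that `S ⊥ Q | Y` and `S ⊥ Q | Z`. -/
noncomputable def SIGH {S Y Z : Type} [Fintype S] [Fintype Y] [Fintype Z]
    (p : S × Y × Z → ℝ) : ℝ :=
  sSup { r : ℝ | ∃ (Q : Type) (instQ : Fintype Q) (e : S × Y × Z × Q → ℝ),
      (∀ x, 0 ≤ e x) ∧
      (∀ s y z, (∑ q ∈ @Finset.univ Q instQ, e (s, y, z, q)) = p (s, y, z)) ∧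
      @cmi3 S Q Y _ instQ _ (fun x => ∑ z, e (x.1, x.2.2, z, x.2.1)) = 0 ∧
      @cmi3 S Q Z _ instQ _ (fun x => ∑ y, e (x.1, y, x.2.2, x.2.1)) = 0 ∧
      r = @mi2 S Q _ instQ (fun x => ∑ y, ∑ z, e (x.1, y, z, x.2)) }


section Helpers

lemma aux_log_le_exp_inv_mul {t : ℝ} (ht : 0 < t) : Real.log t ≤ t * (Real.exp 1)⁻¹ := by
  have h : 0 < t * (Real.exp 1)⁻¹ := by positivity
  have := Real.log_le_sub_one_of_pos h
  rw [Real.log_mul (ne_of_gt ht) (by positivity), Real.log_inv, Real.log_exp] at this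
  linarith

lemma aux_neg_mul_log_le {x : ℝ} (hx : 0 ≤ x) : x * Real.log (x⁻¹) ≤ (Real.exp 1)⁻¹ := by
  rcases eq_or_lt_of_le hx with h | h
  · simp [← h]; positivity
  · calc x * Real.log x⁻¹ ≤ x * (x⁻¹ * (Real.exp 1)⁻¹) :=
        mul_le_mul_of_nonneg_left (aux_log_le_exp_inv_mul (by positivity)) hx
      _ = (Real.exp 1)⁻¹ := by field_simp

lemma aux_log_div_self (x : ℝ) : Real.log (x / x) = 0 := by
  rcases eq_or_ne x 0 with h | h
  · simp [h]
  · simp [div_self h]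

lemma mi2_le {A B : Type} [Fintype A] [Fintype B] (p : A × B → ℝ) (hp : ∀ x, 0 ≤ p x) :
    mi2 p ≤ (Fintype.card A) * (Real.exp 1)⁻¹ := by
  unfold mi2
  have key : ∀ a : A, ∑ b, p (a, b) * Real.log (p (a, b) /
      ((∑ b', p (a, b')) * (∑ a', p (a', b)))) ≤ (Real.exp 1)⁻¹ := by
    intro a
    have h1 : ∀ b : B, p (a, b) * Real.log (p (a, b) /
        ((∑ b', p (a, b')) * (∑ a', p (a', b)))) ≤ p (a, b) * Real.log ((∑ b', p (a, b'))⁻¹) := by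
      intro b
      rcases eq_or_lt_of_le (hp (a, b)) with h | h
      · rw [← h]; simp
      · have hA : 0 < ∑ b', p (a, b') :=
          lt_of_lt_of_le h (Finset.single_le_sum (fun i _ => hp (a, i)) (Finset.mem_univ b))
        have hB : 0 < ∑ a', p (a', b) :=
          lt_of_lt_of_le h (Finset.single_le_sum (fun i _ => hp (i, b)) (Finset.mem_univ a))
        have hle : p (a, b) ≤ ∑ a', p (a', b) :=
          Finset.single_le_sum (fun i _ => hp (i, b)) (Finset.mem_univ a)
        refine mul_le_mul_of_nonneg_left (Real.log_le_log (by positivity) ?_) h.le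
        rw [div_le_iff₀ (by positivity)]
        calc p (a, b) ≤ ∑ a', p (a', b) := hle
          _ = (∑ b', p (a, b'))⁻¹ * ((∑ b', p (a, b')) * (∑ a', p (a', b))) := by
              field_simp
    calc ∑ b, p (a, b) * Real.log (p (a, b) / ((∑ b', p (a, b')) * (∑ a', p (a', b))))
        ≤ ∑ b, p (a, b) * Real.log ((∑ b', p (a, b'))⁻¹) := Finset.sum_le_sum fun b _ => h1 b
      _ = (∑ b', p (a, b')) * Real.log ((∑ b', p (a, b'))⁻¹) := by rw [← Finset.sum_mul]
      _ ≤ (Real.exp 1)⁻¹ := aux_neg_mul_log_le (Finset.sum_nonneg fun i _ => hp (a, i))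
  calc (∑ a, ∑ b, p (a, b) * Real.log (p (a, b) / ((∑ b', p (a, b')) * (∑ a', p (a', b)))))
      ≤ ∑ _a : A, (Real.exp 1)⁻¹ := Finset.sum_le_sum fun a _ => key a
    _ = (Fintype.card A) * (Real.exp 1)⁻¹ := by
        rw [Finset.sum_const, Finset.card_univ, nsmul_eq_mul]

lemma sum_decouple {A B C D : Type} [Fintype A] [Fintype B] [Fintype C] [Fintype D]
    (F : A × B → ℝ) (G : C × D → ℝ) :
    ∑ u : A × C, ∑ v : B × D, F (u.1, v.1) * G (u.2, v.2) =
      (∑ x, F x) * (∑ y, G y) := by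
  simp only [Fintype.sum_prod_type]
  rw [show (∑ a, ∑ c, ∑ b, ∑ d, F (a, b) * G (c, d)) =
      ∑ a, ∑ c, (∑ b, F (a, b)) * (∑ d, G (c, d)) from
    Finset.sum_congr rfl fun a _ => Finset.sum_congr rfl fun c _ =>
      (Finset.sum_mul_sum _ _ _ _).symm]
  rw [show (∑ a, ∑ c, (∑ b, F (a, b)) * (∑ d, G (c, d))) =
      (∑ a, ∑ b, F (a, b)) * (∑ c, ∑ d, G (c, d)) from
    (Finset.sum_mul_sum _ _ _ _).symm]

lemma mi2_prod {A B C D : Type} [Fintype A] [Fintype B] [Fintype C] [Fintype D]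
    (p : A × B → ℝ) (q : C × D → ℝ) (hp : ∀ x, 0 ≤ p x) (hq : ∀ x, 0 ≤ q x)
    (hp1 : ∑ x, p x = 1) (hq1 : ∑ x, q x = 1) :
    mi2 (fun x : (A × C) × (B × D) => p (x.1.1, x.2.1) * q (x.1.2, x.2.2)) =
      mi2 p + mi2 q := by
  set F : A × B → ℝ := fun ab =>
    p (ab.1, ab.2) * Real.log (p (ab.1, ab.2) /
      ((∑ b', p (ab.1, b')) * (∑ a', p (a', ab.2)))) with hF
  set G : C × D → ℝ := fun cd =>
    q (cd.1, cd.2) * Real.log (q (cd.1, cd.2) /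
      ((∑ d', q (cd.1, d')) * (∑ c', q (c', cd.2)))) with hG
  have hpt : ∀ (u : A × C) (v : B × D),
      p (u.1, v.1) * q (u.2, v.2) *
        Real.log (p (u.1, v.1) * q (u.2, v.2) /
          ((∑ v' : B × D, p (u.1, v'.1) * q (u.2, v'.2)) *
           (∑ u' : A × C, p (u'.1, v.1) * q (u'.2, v.2)))) =
      F (u.1, v.1) * q (u.2, v.2) + p (u.1, v.1) * G (u.2, v.2) := by
    intro u v
    have hm1 : (∑ v' : B × D, p (u.1, v'.1) * q (u.2, v'.2)) =
        (∑ b', p (u.1, b')) * (∑ d', q (u.2, d')) := by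
      rw [Fintype.sum_prod_type, Finset.sum_mul_sum]
    have hm2 : (∑ u' : A × C, p (u'.1, v.1) * q (u'.2, v.2)) =
        (∑ a', p (a', v.1)) * (∑ c', q (c', v.2)) := by
      rw [Fintype.sum_prod_type, Finset.sum_mul_sum]
    rw [hm1, hm2]
    rcases eq_or_lt_of_le (hp (u.1, v.1)) with h1 | h1
    · simp [hF, ← h1]
    rcases eq_or_lt_of_le (hq (u.2, v.2)) with h2 | h2
    · simp [hG, ← h2]
    have hpA : 0 < ∑ b', p (u.1, b') :=
      lt_of_lt_of_le h1 (Finset.single_le_sum (fun i _ => hp (u.1, i)) (Finset.mem_univ v.1))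
    have hpB : 0 < ∑ a', p (a', v.1) :=
      lt_of_lt_of_le h1 (Finset.single_le_sum (fun i _ => hp (i, v.1)) (Finset.mem_univ u.1))
    have hqC : 0 < ∑ d', q (u.2, d') :=
      lt_of_lt_of_le h2 (Finset.single_le_sum (fun i _ => hq (u.2, i)) (Finset.mem_univ v.2))
    have hqD : 0 < ∑ c', q (c', v.2) :=
      lt_of_lt_of_le h2 (Finset.single_le_sum (fun i _ => hq (i, v.2)) (Finset.mem_univ u.2))
    have hsplit : p (u.1, v.1) * q (u.2, v.2) /
        ((∑ b', p (u.1, b')) * (∑ d', q (u.2, d')) *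
          ((∑ a', p (a', v.1)) * (∑ c', q (c', v.2)))) =
        (p (u.1, v.1) / ((∑ b', p (u.1, b')) * (∑ a', p (a', v.1)))) *
        (q (u.2, v.2) / ((∑ d', q (u.2, d')) * (∑ c', q (c', v.2)))) := by
      rw [div_mul_div_comm]; ring_nf
    rw [hsplit, Real.log_mul (ne_of_gt (by positivity)) (ne_of_gt (by positivity))]
    simp only [hF, hG]
    ring
  unfold mi2
  simp only []
  rw [show (∑ u : A × C, ∑ v : B × D,
        p (u.1, v.1) * q (u.2, v.2) *
          Real.log (p (u.1, v.1) * q (u.2, v.2) /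
            ((∑ v' : B × D, p (u.1, v'.1) * q (u.2, v'.2)) *
             (∑ u' : A × C, p (u'.1, v.1) * q (u'.2, v.2))))) =
      ∑ u : A × C, ∑ v : B × D,
        (F (u.1, v.1) * q (u.2, v.2) + p (u.1, v.1) * G (u.2, v.2)) from
    Finset.sum_congr rfl fun u _ => Finset.sum_congr rfl fun v _ => hpt u v]
  simp only [Finset.sum_add_distrib]
  rw [sum_decouple F q, sum_decouple p G, hq1, hp1, Fintype.sum_prod_type, Fintype.sum_prod_type]
  simp only [one_mul, mul_one]
  rfl

lemma sum_decouple3 {A B C A' B' C' : Type} [Fintype A] [Fintype B] [Fintype C]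
    [Fintype A'] [Fintype B'] [Fintype C'] (F : A × B × C → ℝ) (G : A' × B' × C' → ℝ) :
    ∑ u : A × A', ∑ v : B × B', ∑ w : C × C', F (u.1, v.1, w.1) * G (u.2, v.2, w.2) =
      (∑ x, F x) * (∑ y, G y) := by
  simp only [Fintype.sum_prod_type]
  rw [show (∑ a, ∑ a', ∑ b, ∑ b', ∑ c, ∑ c', F (a, b, c) * G (a', b', c')) =
      ∑ a, ∑ a', ∑ b, ∑ b', (∑ c, F (a, b, c)) * (∑ c', G (a', b', c')) from
    Finset.sum_congr rfl fun a _ => Finset.sum_congr rfl fun a' _ =>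
      Finset.sum_congr rfl fun b _ => Finset.sum_congr rfl fun b' _ =>
        (Finset.sum_mul_sum _ _ _ _).symm]
  rw [show (∑ a, ∑ a', ∑ b, ∑ b', (∑ c, F (a, b, c)) * (∑ c', G (a', b', c'))) =
      ∑ a, ∑ a', (∑ b, ∑ c, F (a, b, c)) * (∑ b', ∑ c', G (a', b', c')) from
    Finset.sum_congr rfl fun a _ => Finset.sum_congr rfl fun a' _ =>
      (Finset.sum_mul_sum _ _ _ _).symm]
  exact (Finset.sum_mul_sum _ _ _ _).symm

lemma cmi3_prod {A B C A' B' C' : Type} [Fintype A] [Fintype B] [Fintype C]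
    [Fintype A'] [Fintype B'] [Fintype C']
    (p : A × B × C → ℝ) (q : A' × B' × C' → ℝ) (hp : ∀ x, 0 ≤ p x) (hq : ∀ x, 0 ≤ q x)
    (hp1 : ∑ x, p x = 1) (hq1 : ∑ x, q x = 1) :
    cmi3 (fun x : (A × A') × (B × B') × (C × C') =>
        p (x.1.1, x.2.1.1, x.2.2.1) * q (x.1.2, x.2.1.2, x.2.2.2)) =
      cmi3 p + cmi3 q := by
  set F : A × B × C → ℝ := fun t =>
    p (t.1, t.2.1, t.2.2) * Real.log ((p (t.1, t.2.1, t.2.2) *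
        (∑ a', ∑ b', p (a', b', t.2.2))) /
      ((∑ b', p (t.1, b', t.2.2)) * (∑ a', p (a', t.2.1, t.2.2)))) with hFdef
  set G : A' × B' × C' → ℝ := fun t =>
    q (t.1, t.2.1, t.2.2) * Real.log ((q (t.1, t.2.1, t.2.2) *
        (∑ a', ∑ b', q (a', b', t.2.2))) /
      ((∑ b', q (t.1, b', t.2.2)) * (∑ a', q (a', t.2.1, t.2.2)))) with hGdef
  have hpt : ∀ (u : A × A') (v : B × B') (w : C × C'),
      p (u.1, v.1, w.1) * q (u.2, v.2, w.2) *
        Real.log ((p (u.1, v.1, w.1) * q (u.2, v.2, w.2) *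
            (∑ u' : A × A', ∑ v' : B × B',
              p (u'.1, v'.1, w.1) * q (u'.2, v'.2, w.2))) /
          ((∑ v' : B × B', p (u.1, v'.1, w.1) * q (u.2, v'.2, w.2)) *
           (∑ u' : A × A', p (u'.1, v.1, w.1) * q (u'.2, v.2, w.2)))) =
      F (u.1, v.1, w.1) * q (u.2, v.2, w.2) + p (u.1, v.1, w.1) * G (u.2, v.2, w.2) := by
    intro u v w
    have hm0 : (∑ u' : A × A', ∑ v' : B × B',
        p (u'.1, v'.1, w.1) * q (u'.2, v'.2, w.2)) =
        (∑ a', ∑ b', p (a', b', w.1)) * (∑ a', ∑ b', q (a', b', w.2)) := by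
      rw [show (∑ u' : A × A', ∑ v' : B × B',
          p (u'.1, v'.1, w.1) * q (u'.2, v'.2, w.2)) =
          ∑ u' : A × A', (∑ b', p (u'.1, b', w.1)) * (∑ b', q (u'.2, b', w.2)) from
        Finset.sum_congr rfl fun u' _ => by
          rw [Fintype.sum_prod_type, Finset.sum_mul_sum]]
      rw [Fintype.sum_prod_type, Finset.sum_mul_sum]
    have hm1 : (∑ v' : B × B', p (u.1, v'.1, w.1) * q (u.2, v'.2, w.2)) =
        (∑ b', p (u.1, b', w.1)) * (∑ b', q (u.2, b', w.2)) := by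
      rw [Fintype.sum_prod_type, Finset.sum_mul_sum]
    have hm2 : (∑ u' : A × A', p (u'.1, v.1, w.1) * q (u'.2, v.2, w.2)) =
        (∑ a', p (a', v.1, w.1)) * (∑ a', q (a', v.2, w.2)) := by
      rw [Fintype.sum_prod_type, Finset.sum_mul_sum]
    rw [hm0, hm1, hm2]
    rcases eq_or_lt_of_le (hp (u.1, v.1, w.1)) with h1 | h1
    · simp [hFdef, ← h1]
    rcases eq_or_lt_of_le (hq (u.2, v.2, w.2)) with h2 | h2
    · simp [hGdef, ← h2]
    have hpM1 : 0 < ∑ b', p (u.1, b', w.1) :=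
      lt_of_lt_of_le h1 (Finset.single_le_sum (fun i _ => hp (u.1, i, w.1)) (Finset.mem_univ v.1))
    have hpM2 : 0 < ∑ a', p (a', v.1, w.1) :=
      lt_of_lt_of_le h1 (Finset.single_le_sum (fun i _ => hp (i, v.1, w.1)) (Finset.mem_univ u.1))
    have hpN : 0 < ∑ a', ∑ b', p (a', b', w.1) :=
      lt_of_lt_of_le hpM1 (Finset.single_le_sum
        (fun i _ => Finset.sum_nonneg fun j _ => hp (i, j, w.1)) (Finset.mem_univ u.1))
    have hqM1 : 0 < ∑ b', q (u.2, b', w.2) :=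
      lt_of_lt_of_le h2 (Finset.single_le_sum (fun i _ => hq (u.2, i, w.2)) (Finset.mem_univ v.2))
    have hqM2 : 0 < ∑ a', q (a', v.2, w.2) :=
      lt_of_lt_of_le h2 (Finset.single_le_sum (fun i _ => hq (i, v.2, w.2)) (Finset.mem_univ u.2))
    have hqN : 0 < ∑ a', ∑ b', q (a', b', w.2) :=
      lt_of_lt_of_le hqM1 (Finset.single_le_sum
        (fun i _ => Finset.sum_nonneg fun j _ => hq (i, j, w.2)) (Finset.mem_univ u.2))
    have hsplit : p (u.1, v.1, w.1) * q (u.2, v.2, w.2) *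
        ((∑ a', ∑ b', p (a', b', w.1)) * (∑ a', ∑ b', q (a', b', w.2))) /
        ((∑ b', p (u.1, b', w.1)) * (∑ b', q (u.2, b', w.2)) *
          ((∑ a', p (a', v.1, w.1)) * (∑ a', q (a', v.2, w.2)))) =
        (p (u.1, v.1, w.1) * (∑ a', ∑ b', p (a', b', w.1)) /
          ((∑ b', p (u.1, b', w.1)) * (∑ a', p (a', v.1, w.1)))) *
        (q (u.2, v.2, w.2) * (∑ a', ∑ b', q (a', b', w.2)) /
          ((∑ b', q (u.2, b', w.2)) * (∑ a', q (a', v.2, w.2)))) := by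
      rw [div_mul_div_comm]; ring_nf
    rw [hsplit, Real.log_mul (ne_of_gt (by positivity)) (ne_of_gt (by positivity))]
    simp only [hFdef, hGdef]
    ring
  unfold cmi3
  simp only []
  rw [show (∑ u : A × A', ∑ v : B × B', ∑ w : C × C',
        p (u.1, v.1, w.1) * q (u.2, v.2, w.2) *
          Real.log ((p (u.1, v.1, w.1) * q (u.2, v.2, w.2) *
              (∑ u' : A × A', ∑ v' : B × B',
                p (u'.1, v'.1, w.1) * q (u'.2, v'.2, w.2))) /
            ((∑ v' : B × B', p (u.1, v'.1, w.1) * q (u.2, v'.2, w.2)) *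
             (∑ u' : A × A', p (u'.1, v.1, w.1) * q (u'.2, v.2, w.2))))) =
      ∑ u : A × A', ∑ v : B × B', ∑ w : C × C',
        (F (u.1, v.1, w.1) * q (u.2, v.2, w.2) + p (u.1, v.1, w.1) * G (u.2, v.2, w.2)) from
    Finset.sum_congr rfl fun u _ => Finset.sum_congr rfl fun v _ =>
      Finset.sum_congr rfl fun w _ => hpt u v w]
  simp only [Finset.sum_add_distrib]
  rw [sum_decouple3 F q, sum_decouple3 p G, hq1, hp1]
  simp only [mul_one, one_mul, Fintype.sum_prod_type]
  rfl

lemma cmi3_punit {S Y : Type} [Fintype S] [Fintype Y] (f : S × Y → ℝ) :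
    cmi3 (fun x : S × PUnit × Y => f (x.1, x.2.2)) = 0 := by
  unfold cmi3
  apply Finset.sum_eq_zero; intro a _
  apply Finset.sum_eq_zero; intro b _
  apply Finset.sum_eq_zero; intro c _
  simp only [Finset.univ_unique, Finset.sum_singleton]
  rw [aux_log_div_self, mul_zero]

lemma mi2_punit {S : Type} [Fintype S] (h : S → ℝ) (h1 : ∑ s, h s = 1) :
    mi2 (fun x : S × PUnit => h x.1) = 0 := by
  unfold mi2
  apply Finset.sum_eq_zero; intro a _
  apply Finset.sum_eq_zero; intro b _
  simp only [Finset.univ_unique, Finset.sum_singleton]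
  rw [h1, mul_one, aux_log_div_self, mul_zero]

def SIGHset {S Y Z : Type} [Fintype S] [Fintype Y] [Fintype Z]
    (p : S × Y × Z → ℝ) : Set ℝ :=
  { r : ℝ | ∃ (Q : Type) (instQ : Fintype Q) (e : S × Y × Z × Q → ℝ),
      (∀ x, 0 ≤ e x) ∧
      (∀ s y z, (∑ q ∈ @Finset.univ Q instQ, e (s, y, z, q)) = p (s, y, z)) ∧
      @cmi3 S Q Y _ instQ _ (fun x => ∑ z, e (x.1, x.2.2, z, x.2.1)) = 0 ∧
      @cmi3 S Q Z _ instQ _ (fun x => ∑ y, e (x.1, y, x.2.2, x.2.1)) = 0 ∧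
      r = @mi2 S Q _ instQ (fun x => ∑ y, ∑ z, e (x.1, y, z, x.2)) }

lemma SIGH_eq_sSup {S Y Z : Type} [Fintype S] [Fintype Y] [Fintype Z]
    (p : S × Y × Z → ℝ) : SIGH p = sSup (SIGHset p) := rfl

lemma zero_mem_SIGHset {S Y Z : Type} [Fintype S] [Fintype Y] [Fintype Z]
    (p : S × Y × Z → ℝ) (hp : IsProbDist p) : (0 : ℝ) ∈ SIGHset p := by
  refine ⟨PUnit, inferInstance, fun x => p (x.1, x.2.1, x.2.2.1), fun x => hp.1 _,
    fun s y z => by simp, ?_, ?_, ?_⟩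
  · exact cmi3_punit (fun sy => ∑ z, p (sy.1, sy.2, z))
  · exact cmi3_punit (fun sz => ∑ y, p (sz.1, y, sz.2))
  · refine (mi2_punit (fun s => ∑ y, ∑ z, p (s, y, z)) ?_).symm
    rw [← hp.2]
    simp [Fintype.sum_prod_type]

lemma bddAbove_SIGHset {S Y Z : Type} [Fintype S] [Fintype Y] [Fintype Z]
    (p : S × Y × Z → ℝ) : BddAbove (SIGHset p) := by
  refine ⟨(Fintype.card S) * (Real.exp 1)⁻¹, fun r hr => ?_⟩
  obtain ⟨Q, iQ, e, hen, -, -, -, hre⟩ := hr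
  letI := iQ
  rw [hre]
  exact mi2_le _ (fun x => Finset.sum_nonneg fun y _ => Finset.sum_nonneg fun z _ => hen _)

set_option maxHeartbeats 2000000 in
lemma mem_SIGHset_prod {S1 Y1 Z1 S2 Y2 Z2 : Type} [Fintype S1] [Fintype Y1] [Fintype Z1]
    [Fintype S2] [Fintype Y2] [Fintype Z2]
    {p1 : S1 × Y1 × Z1 → ℝ} {p2 : S2 × Y2 × Z2 → ℝ}
    (hp1 : IsProbDist p1) (hp2 : IsProbDist p2) {r1 r2 : ℝ}
    (h1 : r1 ∈ SIGHset p1) (h2 : r2 ∈ SIGHset p2) :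
    r1 + r2 ∈ SIGHset (prodDist p1 p2) := by
  obtain ⟨Q1, iQ1, e1, he1n, he1m, hc1y, hc1z, hr1⟩ := h1
  obtain ⟨Q2, iQ2, e2, he2n, he2m, hc2y, hc2z, hr2⟩ := h2
  letI := iQ1; letI := iQ2
  have hs1 : ∑ x : S1 × Y1 × Z1 × Q1, e1 x = 1 := by
    rw [← hp1.2]
    simp only [Fintype.sum_prod_type]
    exact Finset.sum_congr rfl fun s _ => Finset.sum_congr rfl fun y _ =>
      Finset.sum_congr rfl fun z _ => he1m s y z
  have hs2 : ∑ x : S2 × Y2 × Z2 × Q2, e2 x = 1 := by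
    rw [← hp2.2]
    simp only [Fintype.sum_prod_type]
    exact Finset.sum_congr rfl fun s _ => Finset.sum_congr rfl fun y _ =>
      Finset.sum_congr rfl fun z _ => he2m s y z
  refine ⟨Q1 × Q2, inferInstance,
    fun x => e1 (x.1.1, x.2.1.1, x.2.2.1.1, x.2.2.2.1) * e2 (x.1.2, x.2.1.2, x.2.2.1.2, x.2.2.2.2),
    fun x => mul_nonneg (he1n _) (he2n _), ?_, ?_, ?_, ?_⟩
  · intro s y z
    calc (∑ q : Q1 × Q2, e1 (s.1, y.1, z.1, q.1) * e2 (s.2, y.2, z.2, q.2))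
        = (∑ a : Q1, e1 (s.1, y.1, z.1, a)) * (∑ b : Q2, e2 (s.2, y.2, z.2, b)) := by
          rw [Fintype.sum_prod_type, Finset.sum_mul_sum]
      _ = prodDist p1 p2 (s, y, z) := by rw [he1m, he2m]; rfl
  · -- I(S;Q|Y) = 0
    have hfun : (fun x : (S1 × S2) × (Q1 × Q2) × (Y1 × Y2) =>
        ∑ z : Z1 × Z2, e1 (x.1.1, x.2.2.1, z.1, x.2.1.1) * e2 (x.1.2, x.2.2.2, z.2, x.2.1.2)) =
        (fun x : (S1 × S2) × (Q1 × Q2) × (Y1 × Y2) =>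
          (fun w : S1 × Q1 × Y1 => ∑ z, e1 (w.1, w.2.2, z, w.2.1)) (x.1.1, x.2.1.1, x.2.2.1) *
          (fun w : S2 × Q2 × Y2 => ∑ z, e2 (w.1, w.2.2, z, w.2.1)) (x.1.2, x.2.1.2, x.2.2.2)) := by
      funext x
      show (∑ z : Z1 × Z2, e1 (x.1.1, x.2.2.1, z.1, x.2.1.1) * e2 (x.1.2, x.2.2.2, z.2, x.2.1.2)) =
        (∑ z, e1 (x.1.1, x.2.2.1, z, x.2.1.1)) * (∑ z, e2 (x.1.2, x.2.2.2, z, x.2.1.2))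
      rw [Fintype.sum_prod_type, Finset.sum_mul_sum]
    show cmi3 _ = 0
    rw [show (fun x : (S1 × S2) × (Q1 × Q2) × (Y1 × Y2) =>
        ∑ z : Z1 × Z2, e1 (x.1.1, x.2.2.1, z.1, x.2.1.1) * e2 (x.1.2, x.2.2.2, z.2, x.2.1.2)) =
        _ from hfun]
    rw [cmi3_prod (fun w : S1 × Q1 × Y1 => ∑ z, e1 (w.1, w.2.2, z, w.2.1))
      (fun w : S2 × Q2 × Y2 => ∑ z, e2 (w.1, w.2.2, z, w.2.1))
      (fun w => Finset.sum_nonneg fun z _ => he1n _)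
      (fun w => Finset.sum_nonneg fun z _ => he2n _) ?_ ?_]
    · rw [hc1y, hc2y, add_zero]
    · calc ∑ w : S1 × Q1 × Y1, ∑ z, e1 (w.1, w.2.2, z, w.2.1)
          = ∑ x : (S1 × Q1 × Y1) × Z1, e1 (x.1.1, x.1.2.2, x.2, x.1.2.1) :=
            (Fintype.sum_prod_type
              (fun x : (S1 × Q1 × Y1) × Z1 => e1 (x.1.1, x.1.2.2, x.2, x.1.2.1))).symm
        _ = ∑ x : S1 × Y1 × Z1 × Q1, e1 x :=
            Equiv.sum_comp ⟨fun x => (x.1.1, x.1.2.2, x.2, x.1.2.1),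
              fun u => ((u.1, u.2.2.2, u.2.1), u.2.2.1), fun _ => rfl, fun _ => rfl⟩ e1
        _ = 1 := hs1
    · calc ∑ w : S2 × Q2 × Y2, ∑ z, e2 (w.1, w.2.2, z, w.2.1)
          = ∑ x : (S2 × Q2 × Y2) × Z2, e2 (x.1.1, x.1.2.2, x.2, x.1.2.1) :=
            (Fintype.sum_prod_type
              (fun x : (S2 × Q2 × Y2) × Z2 => e2 (x.1.1, x.1.2.2, x.2, x.1.2.1))).symm
        _ = ∑ x : S2 × Y2 × Z2 × Q2, e2 x :=
            Equiv.sum_comp ⟨fun x => (x.1.1, x.1.2.2, x.2, x.1.2.1),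
              fun u => ((u.1, u.2.2.2, u.2.1), u.2.2.1), fun _ => rfl, fun _ => rfl⟩ e2
        _ = 1 := hs2
  · -- I(S;Q|Z) = 0
    have hfun : (fun x : (S1 × S2) × (Q1 × Q2) × (Z1 × Z2) =>
        ∑ y : Y1 × Y2, e1 (x.1.1, y.1, x.2.2.1, x.2.1.1) * e2 (x.1.2, y.2, x.2.2.2, x.2.1.2)) =
        (fun x : (S1 × S2) × (Q1 × Q2) × (Z1 × Z2) =>
          (fun w : S1 × Q1 × Z1 => ∑ y, e1 (w.1, y, w.2.2, w.2.1)) (x.1.1, x.2.1.1, x.2.2.1) *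
          (fun w : S2 × Q2 × Z2 => ∑ y, e2 (w.1, y, w.2.2, w.2.1)) (x.1.2, x.2.1.2, x.2.2.2)) := by
      funext x
      show (∑ y : Y1 × Y2, e1 (x.1.1, y.1, x.2.2.1, x.2.1.1) * e2 (x.1.2, y.2, x.2.2.2, x.2.1.2)) =
        (∑ y, e1 (x.1.1, y, x.2.2.1, x.2.1.1)) * (∑ y, e2 (x.1.2, y, x.2.2.2, x.2.1.2))
      rw [Fintype.sum_prod_type, Finset.sum_mul_sum]
    show cmi3 _ = 0
    rw [show (fun x : (S1 × S2) × (Q1 × Q2) × (Z1 × Z2) =>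
        ∑ y : Y1 × Y2, e1 (x.1.1, y.1, x.2.2.1, x.2.1.1) * e2 (x.1.2, y.2, x.2.2.2, x.2.1.2)) =
        _ from hfun]
    rw [cmi3_prod (fun w : S1 × Q1 × Z1 => ∑ y, e1 (w.1, y, w.2.2, w.2.1))
      (fun w : S2 × Q2 × Z2 => ∑ y, e2 (w.1, y, w.2.2, w.2.1))
      (fun w => Finset.sum_nonneg fun y _ => he1n _)
      (fun w => Finset.sum_nonneg fun y _ => he2n _) ?_ ?_]
    · rw [hc1z, hc2z, add_zero]
    · calc ∑ w : S1 × Q1 × Z1, ∑ y, e1 (w.1, y, w.2.2, w.2.1)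
          = ∑ x : (S1 × Q1 × Z1) × Y1, e1 (x.1.1, x.2, x.1.2.2, x.1.2.1) :=
            (Fintype.sum_prod_type
              (fun x : (S1 × Q1 × Z1) × Y1 => e1 (x.1.1, x.2, x.1.2.2, x.1.2.1))).symm
        _ = ∑ x : S1 × Y1 × Z1 × Q1, e1 x :=
            Equiv.sum_comp ⟨fun x => (x.1.1, x.2, x.1.2.2, x.1.2.1),
              fun u => ((u.1, u.2.2.2, u.2.2.1), u.2.1), fun _ => rfl, fun _ => rfl⟩ e1
        _ = 1 := hs1
    · calc ∑ w : S2 × Q2 × Z2, ∑ y, e2 (w.1, y, w.2.2, w.2.1)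
          = ∑ x : (S2 × Q2 × Z2) × Y2, e2 (x.1.1, x.2, x.1.2.2, x.1.2.1) :=
            (Fintype.sum_prod_type
              (fun x : (S2 × Q2 × Z2) × Y2 => e2 (x.1.1, x.2, x.1.2.2, x.1.2.1))).symm
        _ = ∑ x : S2 × Y2 × Z2 × Q2, e2 x :=
            Equiv.sum_comp ⟨fun x => (x.1.1, x.2, x.1.2.2, x.1.2.1),
              fun u => ((u.1, u.2.2.2, u.2.2.1), u.2.1), fun _ => rfl, fun _ => rfl⟩ e2
        _ = 1 := hs2
  · -- r1 + r2 = I(S;Q)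
    have hfun : (fun x : (S1 × S2) × (Q1 × Q2) =>
        ∑ y : Y1 × Y2, ∑ z : Z1 × Z2,
          e1 (x.1.1, y.1, z.1, x.2.1) * e2 (x.1.2, y.2, z.2, x.2.2)) =
        (fun x : (S1 × S2) × (Q1 × Q2) =>
          (fun w : S1 × Q1 => ∑ y, ∑ z, e1 (w.1, y, z, w.2)) (x.1.1, x.2.1) *
          (fun w : S2 × Q2 => ∑ y, ∑ z, e2 (w.1, y, z, w.2)) (x.1.2, x.2.2)) := by
      funext x
      show (∑ y : Y1 × Y2, ∑ z : Z1 × Z2,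
          e1 (x.1.1, y.1, z.1, x.2.1) * e2 (x.1.2, y.2, z.2, x.2.2)) =
        (∑ y, ∑ z, e1 (x.1.1, y, z, x.2.1)) * (∑ y, ∑ z, e2 (x.1.2, y, z, x.2.2))
      rw [show (∑ y : Y1 × Y2, ∑ z : Z1 × Z2,
            e1 (x.1.1, y.1, z.1, x.2.1) * e2 (x.1.2, y.2, z.2, x.2.2)) =
          ∑ y : Y1 × Y2, (∑ z1, e1 (x.1.1, y.1, z1, x.2.1)) * (∑ z2, e2 (x.1.2, y.2, z2, x.2.2)) from
        Finset.sum_congr rfl fun y _ => by rw [Fintype.sum_prod_type, Finset.sum_mul_sum]]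
      rw [Fintype.sum_prod_type]
      rw [show (∑ a : Y1, ∑ b : Y2,
            (∑ z1, e1 (x.1.1, a, z1, x.2.1)) * (∑ z2, e2 (x.1.2, b, z2, x.2.2))) =
          (∑ a : Y1, ∑ z1, e1 (x.1.1, a, z1, x.2.1)) *
          (∑ b : Y2, ∑ z2, e2 (x.1.2, b, z2, x.2.2)) from (Finset.sum_mul_sum _ _ _ _).symm]
    show r1 + r2 = mi2 _
    rw [show (fun x : (S1 × S2) × (Q1 × Q2) =>
        ∑ y : Y1 × Y2, ∑ z : Z1 × Z2,
          e1 (x.1.1, y.1, z.1, x.2.1) * e2 (x.1.2, y.2, z.2, x.2.2)) = _ from hfun]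
    rw [mi2_prod (fun w : S1 × Q1 => ∑ y, ∑ z, e1 (w.1, y, z, w.2))
      (fun w : S2 × Q2 => ∑ y, ∑ z, e2 (w.1, y, z, w.2))
      (fun w => Finset.sum_nonneg fun y _ => Finset.sum_nonneg fun z _ => he1n _)
      (fun w => Finset.sum_nonneg fun y _ => Finset.sum_nonneg fun z _ => he2n _) ?_ ?_]
    · rw [hr1, hr2]
    · calc ∑ w : S1 × Q1, ∑ y, ∑ z, e1 (w.1, y, z, w.2)
          = ∑ w : S1 × Q1, ∑ t : Y1 × Z1, e1 (w.1, t.1, t.2, w.2) :=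
            Finset.sum_congr rfl fun w _ => (Fintype.sum_prod_type
              (fun t : Y1 × Z1 => e1 (w.1, t.1, t.2, w.2))).symm
        _ = ∑ x : (S1 × Q1) × (Y1 × Z1), e1 (x.1.1, x.2.1, x.2.2, x.1.2) :=
            (Fintype.sum_prod_type
              (fun x : (S1 × Q1) × (Y1 × Z1) => e1 (x.1.1, x.2.1, x.2.2, x.1.2))).symm
        _ = ∑ x : S1 × Y1 × Z1 × Q1, e1 x :=
            Equiv.sum_comp ⟨fun x => (x.1.1, x.2.1, x.2.2, x.1.2),
              fun u => ((u.1, u.2.2.2), (u.2.1, u.2.2.1)), fun _ => rfl, fun _ => rfl⟩ e1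
        _ = 1 := hs1
    · calc ∑ w : S2 × Q2, ∑ y, ∑ z, e2 (w.1, y, z, w.2)
          = ∑ w : S2 × Q2, ∑ t : Y2 × Z2, e2 (w.1, t.1, t.2, w.2) :=
            Finset.sum_congr rfl fun w _ => (Fintype.sum_prod_type
              (fun t : Y2 × Z2 => e2 (w.1, t.1, t.2, w.2))).symm
        _ = ∑ x : (S2 × Q2) × (Y2 × Z2), e2 (x.1.1, x.2.1, x.2.2, x.1.2) :=
            (Fintype.sum_prod_type
              (fun x : (S2 × Q2) × (Y2 × Z2) => e2 (x.1.1, x.2.1, x.2.2, x.1.2))).symm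
        _ = ∑ x : S2 × Y2 × Z2 × Q2, e2 x :=
            Equiv.sum_comp ⟨fun x => (x.1.1, x.2.1, x.2.2, x.1.2),
              fun u => ((u.1, u.2.2.2), (u.2.1, u.2.2.1)), fun _ => rfl, fun _ => rfl⟩ e2
        _ = 1 := hs2

end Helpers

/-- `SI_GH` is superadditive under independent combination. -/
theorem SIGH_superadditive
    {S1 Y1 Z1 S2 Y2 Z2 : Type} [Fintype S1] [Fintype Y1] [Fintype Z1]
    [Fintype S2] [Fintype Y2] [Fintype Z2]
    (p1 : S1 × Y1 × Z1 → ℝ) (p2 : S2 × Y2 × Z2 → ℝ)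
    (hp1 : IsProbDist p1) (hp2 : IsProbDist p2) :
    SIGH p1 + SIGH p2 ≤ SIGH (prodDist p1 p2) := by
  rw [SIGH_eq_sSup, SIGH_eq_sSup, SIGH_eq_sSup]
  have hA0 : (0 : ℝ) ∈ SIGHset p1 := zero_mem_SIGHset p1 hp1
  have hB0 : (0 : ℝ) ∈ SIGHset p2 := zero_mem_SIGHset p2 hp2
  have hCb : BddAbove (SIGHset (prodDist p1 p2)) := bddAbove_SIGHset _
  rw [← le_sub_iff_add_le]
  refine csSup_le ⟨0, hA0⟩ fun a ha => ?_
  rw [le_sub_iff_add_le, add_comm, ← le_sub_iff_add_le]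
  refine csSup_le ⟨0, hB0⟩ fun b hb => ?_
  rw [le_sub_iff_add_le, add_comm]
  exact le_csSup hCb (mem_SIGHset_prod hp1 hp2 ha hb)
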